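/- If T is quasinormal and T^n is normal for some n ≥ 2, then the kernel of T* is contained in the kernel of T. -/

import Mathlib

open ContinuousLinearMap

local notation "⟪" x ", " y "⟫" => @inner ℂ _ _ x y

/-- For self-adjoint S, S^(2k) x = 0 implies S^k x = 0. -/
lemma aux_half_19 {H : Type*} [NormedAddCommGroup H] [InnerProductSpace ℂ H] [CompleteSpace H]
    (S : H →L[ℂ] H) (hS : ContinuousLinearMap.adjoint S = S) (k : ℕ) (x : H)
    (h : (S ^ (2 * k)) x = 0) : (S ^ k) x = 0 := by
  have hadj : ContinuousLinearMap.adjoint (S ^ k) = S ^ k := by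
    rw [← ContinuousLinearMap.star_eq_adjoint] at hS ⊢
    rw [star_pow, hS]
  have h2 : (S ^ k) ((S ^ k) x) = 0 := by
    have : (S ^ k) * (S ^ k) = S ^ (2 * k) := by rw [← pow_add, two_mul]
    calc (S ^ k) ((S ^ k) x) = ((S ^ k) * (S ^ k)) x := rfl
    _ = (S ^ (2 * k)) x := by rw [this]
    _ = 0 := h
  have : ⟪(S ^ k) x, (S ^ k) x⟫ = 0 := by
    have := ContinuousLinearMap.adjoint_inner_right (S ^ k) x ((S ^ k) x)
    rw [hadj, h2, inner_zero_right] at this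
    exact this.symm
  exact inner_self_eq_zero.mp this

/-- For self-adjoint S, S^(2^j) x = 0 implies S x = 0. -/
lemma aux_pow2_19 {H : Type*} [NormedAddCommGroup H] [InnerProductSpace ℂ H] [CompleteSpace H]
    (S : H →L[ℂ] H) (hS : ContinuousLinearMap.adjoint S = S) (j : ℕ) (x : H)
    (h : (S ^ (2 ^ j)) x = 0) : S x = 0 := by
  induction j with
  | zero => simpa using h
  | succ j ih =>
    apply ih
    apply aux_half_19 S hS
    rwa [pow_succ, Nat.mul_comm] at h

theorem stmt_19 {H : Type*} [NormedAddCommGroup H] [InnerProductSpace ℂ H] [CompleteSpace H]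
    (T : H →L[ℂ] H)
    (hq : T * (ContinuousLinearMap.adjoint T * T) = (ContinuousLinearMap.adjoint T * T) * T)
    (n : ℕ) (hn : 2 ≤ n)
    (hnorm : ContinuousLinearMap.adjoint (T ^ n) * T ^ n = T ^ n * ContinuousLinearMap.adjoint (T ^ n)) :
    LinearMap.ker (ContinuousLinearMap.adjoint T : H →ₗ[ℂ] H) ≤ LinearMap.ker (T : H →ₗ[ℂ] H) := by
  intro x hx
  have hx' : ContinuousLinearMap.adjoint T x = 0 := hx
  set S := ContinuousLinearMap.adjoint T * T with hSdef
  -- S is self-adjoint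
  have hSadj : ContinuousLinearMap.adjoint S = S := by
    rw [hSdef, ← ContinuousLinearMap.star_eq_adjoint T, ← ContinuousLinearMap.star_eq_adjoint,
      star_mul, star_star]
  -- adjoint (T^n) x = 0
  have hadjpow : ContinuousLinearMap.adjoint (T ^ n) = (ContinuousLinearMap.adjoint T) ^ n := by
    rw [← ContinuousLinearMap.star_eq_adjoint, star_pow, ContinuousLinearMap.star_eq_adjoint]
  have hTa : (ContinuousLinearMap.adjoint (T ^ n)) x = 0 := by
    obtain ⟨m, rfl⟩ : ∃ m, n = m + 1 := ⟨n - 1, by omega⟩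
    rw [hadjpow, pow_succ]
    calc ((ContinuousLinearMap.adjoint T) ^ m * ContinuousLinearMap.adjoint T) x
        = ((ContinuousLinearMap.adjoint T) ^ m) (ContinuousLinearMap.adjoint T x) := rfl
      _ = 0 := by rw [hx', map_zero]
  -- T^n x = 0 from normality
  have hTn : (T ^ n) x = 0 := by
    have key : ⟪(T ^ n) x, (T ^ n) x⟫ = 0 := by
      have h1 := ContinuousLinearMap.adjoint_inner_right (T ^ n) x ((T ^ n) x)
      -- ⟪x, adjoint (T^n) ((T^n) x)⟫ = ⟪(T^n) x, (T^n) x⟫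
      have h2 : (ContinuousLinearMap.adjoint (T ^ n)) ((T ^ n) x) = 0 := by
        calc (ContinuousLinearMap.adjoint (T ^ n)) ((T ^ n) x)
            = (ContinuousLinearMap.adjoint (T ^ n) * T ^ n) x := rfl
          _ = (T ^ n * ContinuousLinearMap.adjoint (T ^ n)) x := by rw [hnorm]
          _ = (T ^ n) ((ContinuousLinearMap.adjoint (T ^ n)) x) := rfl
          _ = 0 := by rw [hTa, map_zero]
      rw [h2, inner_zero_right] at h1
      exact h1.symm
    exact inner_self_eq_zero.mp key
  -- quasinormal identity: adjoint T ^ k * T ^ k = S ^ k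
  have hcomm : Commute T S := hq
  have hquasi : ∀ k : ℕ, (ContinuousLinearMap.adjoint T) ^ k * T ^ k = S ^ k := by
    intro k
    induction k with
    | zero => simp
    | succ k ih =>
      have hTS : T * S ^ k = S ^ k * T := (hcomm.pow_right k).eq
      calc (ContinuousLinearMap.adjoint T) ^ (k + 1) * T ^ (k + 1)
          = (ContinuousLinearMap.adjoint T) ^ k * (ContinuousLinearMap.adjoint T * (T * T ^ k)) := by
            rw [pow_succ, pow_succ', mul_assoc]
        _ = (ContinuousLinearMap.adjoint T) ^ k * (S * T ^ k) := by rw [hSdef, mul_assoc]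
        _ = (ContinuousLinearMap.adjoint T) ^ k * (T ^ k * S) := by
            rw [(hcomm.symm.pow_right k).eq]
        _ = ((ContinuousLinearMap.adjoint T) ^ k * T ^ k) * S := by rw [mul_assoc]
        _ = S ^ k * S := by rw [ih]
        _ = S ^ (k + 1) := by rw [pow_succ]
  -- hence S^n x = 0
  have hSn : (S ^ n) x = 0 := by
    calc (S ^ n) x = ((ContinuousLinearMap.adjoint T) ^ n * T ^ n) x := by rw [hquasi]
      _ = ((ContinuousLinearMap.adjoint T) ^ n) ((T ^ n) x) := rfl
      _ = 0 := by rw [hTn, map_zero]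
  -- then S^(2^n) x = 0
  have hS2n : (S ^ (2 ^ n)) x = 0 := by
    have hle : n ≤ 2 ^ n := Nat.le_of_lt (Nat.lt_two_pow_self (n := n))
    have : S ^ (2 ^ n) = S ^ (2 ^ n - n) * S ^ n := by
      rw [← pow_add, Nat.sub_add_cancel hle]
    rw [this]
    calc (S ^ (2 ^ n - n) * S ^ n) x = (S ^ (2 ^ n - n)) ((S ^ n) x) := rfl
      _ = 0 := by rw [hSn, map_zero]
  have hSx : S x = 0 := aux_pow2_19 S hSadj n x hS2n
  -- finally T x = 0
  have key : ⟪T x, T x⟫ = 0 := by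
    have h1 := ContinuousLinearMap.adjoint_inner_right T x (T x)
    have h2 : (ContinuousLinearMap.adjoint T) (T x) = 0 := by
      calc (ContinuousLinearMap.adjoint T) (T x) = S x := rfl
        _ = 0 := hSx
    rw [h2, inner_zero_right] at h1
    exact h1.symm
  exact inner_self_eq_zero.mp key
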